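/- Local optimality from the Bellman local-optimality equation: suppose the value function u^# of policy d^# (with matrix P^#, reward r^#, mean η^# = (1-α)μ(I - αP^#)^{-1} r^#, and u^# = (1-α)(I - αP^#)^{-1} f^# where f^# = r^# - β(r^# - η^# e)_⊙^2) satisfies, for every alternative policy with data (P', r'), the componentwise inequality (1-α) f'_{η^#} + α P' u^# ≤ u^#, where f'_{η^#} = r' - β(r' - η^# e)_⊙^2. Then for every alternative policy, the one-sided derivative of the mean-variance along the mixing direction toward that policy is nonpositive: dξ/dδ|_{δ=0} = μ (I - αP^#)^{-1} [ (1-α)(f'_{η^#} - f^#) + α(P' - P^#) u^# ] ≤ 0. -/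
import Mathlib


open Matrix

/-- Local optimality from the Bellman local-optimality equation: if `u^#`
satisfies the componentwise inequality `(1-α) f'_{η#} + α P' u^# ≤ u^#` for an
alternative policy `(P', r')`, then the derivative of the mean-variance along
the mixing direction toward that policy is nonpositive. -/
theorem stmt_19 {n : ℕ} (Psharp P' : Matrix (Fin n) (Fin n) ℝ)
    (hPnn : ∀ i j, 0 ≤ Psharp i j) (hProw : ∀ i, ∑ j, Psharp i j = 1)
    (hP'nn : ∀ i j, 0 ≤ P' i j) (hP'row : ∀ i, ∑ j, P' i j = 1)
    (μ : Fin n → ℝ) (hμnn : ∀ i, 0 ≤ μ i) (hμsum : ∑ i, μ i = 1)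
    (α β : ℝ) (hα0 : 0 < α) (hα1 : α < 1) (hβ : 0 < β)
    (rsharp r' : Fin n → ℝ) (ηsharp : ℝ)
    (hηsharp : ηsharp = (1 - α) * ((μ ᵥ* (1 - α • Psharp)⁻¹) ⬝ᵥ rsharp))
    (fsharp f'η : Fin n → ℝ)
    (hfsharp : fsharp = fun i => rsharp i - β * (rsharp i - ηsharp) ^ 2)
    (hf'η : f'η = fun i => r' i - β * (r' i - ηsharp) ^ 2)
    (usharp : Fin n → ℝ)
    (husharp : usharp = (1 - α) • ((1 - α • Psharp)⁻¹ *ᵥ fsharp))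
    (hfix : usharp = (1 - α) • fsharp + α • (Psharp *ᵥ usharp))
    (hBellman : ∀ x, ((1 - α) • f'η + α • (P' *ᵥ usharp)) x ≤ usharp x) :
    μ ⬝ᵥ ((1 - α • Psharp)⁻¹ *ᵥ
        ((1 - α) • (f'η - fsharp) + α • ((P' - Psharp) *ᵥ usharp))) ≤ 0 := by
  rcases Nat.eq_zero_or_pos n with hn | hn
  · subst hn; simp [dotProduct]
  have hne : Nonempty (Fin n) := ⟨⟨0, hn⟩⟩
  set M : Matrix (Fin n) (Fin n) ℝ := 1 - α • Psharp with hM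
  set v : Fin n → ℝ := (1 - α) • (f'η - fsharp) + α • ((P' - Psharp) *ᵥ usharp) with hv
  -- v ≤ 0 componentwise
  have hvle : ∀ i, v i ≤ 0 := by
    intro i
    have hB := hBellman i
    have hF := congrFun hfix i
    simp only [Pi.add_apply, Pi.smul_apply, smul_eq_mul] at hB hF
    simp only [hv, Pi.add_apply, Pi.smul_apply, Pi.sub_apply, smul_eq_mul,
      Matrix.sub_mulVec, Pi.sub_apply]
    nlinarith [hB, hF]
  -- M is invertible
  have hMinj : Function.Injective M.mulVec := by
    intro x y hxy
    have hz : M *ᵥ (x - y) = 0 := by rw [Matrix.mulVec_sub, hxy, sub_self]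
    set z := x - y with hzdef
    have hzz : ∀ i, z i = α * (Psharp *ᵥ z) i := by
      intro i
      have := congrFun hz i
      simp only [hM, Matrix.sub_mulVec, Matrix.one_mulVec, Matrix.smul_mulVec,
        Pi.sub_apply, Pi.smul_apply, smul_eq_mul, Pi.zero_apply] at this
      linarith
    have hz0 : z = 0 := by
      by_contra hzne
      set m := Finset.univ.sup' (Finset.univ_nonempty) (fun i => |z i|) with hm
      obtain ⟨i0, -, hi0⟩ := Finset.exists_mem_eq_sup' (Finset.univ_nonempty)
        (fun i => |z i|)
      rw [← hm] at hi0
      have hup : ∀ j, |z j| ≤ m := by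
        intro j; rw [hm]; exact Finset.le_sup' (fun i => |z i|) (Finset.mem_univ j)
      have hmpos : 0 < m := by
        rcases lt_or_eq_of_le (abs_nonneg (z i0)) with h | h
        · rw [hi0]; exact h
        · exfalso; apply hzne; funext j
          have hj : |z j| ≤ m := hup j
          rw [hi0, ← h] at hj
          have h2 := abs_nonneg (z j)
          have : |z j| = 0 := le_antisymm hj h2
          simpa [abs_eq_zero] using this
      have hb : m ≤ α * m := by
        have hstep : |z i0| ≤ α * m := by
          rw [hzz i0, abs_mul, abs_of_pos hα0]
          have : |(Psharp *ᵥ z) i0| ≤ m := by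
            calc |(Psharp *ᵥ z) i0| ≤ ∑ j, |Psharp i0 j * z j| := by
                  simpa [Matrix.mulVec, dotProduct] using
                    Finset.abs_sum_le_sum_abs (fun j => Psharp i0 j * z j) Finset.univ
              _ ≤ ∑ j, Psharp i0 j * m := by
                  apply Finset.sum_le_sum
                  intro j _
                  rw [abs_mul, abs_of_nonneg (hPnn i0 j)]
                  exact mul_le_mul_of_nonneg_left (hup j) (hPnn i0 j)
              _ = m := by rw [← Finset.sum_mul, hProw i0, one_mul]
          exact mul_le_mul_of_nonneg_left this (le_of_lt hα0)
        calc m = |z i0| := hi0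
          _ ≤ α * m := hstep
      nlinarith
    exact sub_eq_zero.mp hz0
  have hMunit : IsUnit M.det :=
    (Matrix.isUnit_iff_isUnit_det M).mp (Matrix.mulVec_injective_iff_isUnit.mp hMinj)
  set w : Fin n → ℝ := M⁻¹ *ᵥ v with hw
  have hMw : M *ᵥ w = v := by
    rw [hw, Matrix.mulVec_mulVec, Matrix.mul_nonsing_inv _ hMunit, Matrix.one_mulVec]
  have hwrec : ∀ i, w i = v i + α * (Psharp *ᵥ w) i := by
    intro i
    have := congrFun hMw i
    simp only [hM, Matrix.sub_mulVec, Matrix.one_mulVec, Matrix.smul_mulVec,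
      Pi.sub_apply, Pi.smul_apply, smul_eq_mul] at this
    linarith
  -- w ≤ 0 componentwise via max argument
  have hwle : ∀ i, w i ≤ 0 := by
    set mx := Finset.univ.sup' (Finset.univ_nonempty) (fun i => w i) with hmx
    obtain ⟨i0, -, hi0⟩ := Finset.exists_mem_eq_sup' (Finset.univ_nonempty)
      (fun i => w i)
    rw [← hmx] at hi0
    have hup : ∀ j, w j ≤ mx := by
      intro j; rw [hmx]; exact Finset.le_sup' (fun i => w i) (Finset.mem_univ j)
    have hbound : mx ≤ α * mx := by
      have hP : (Psharp *ᵥ w) i0 ≤ mx := by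
        calc (Psharp *ᵥ w) i0 = ∑ j, Psharp i0 j * w j := by
              simp [Matrix.mulVec, dotProduct]
          _ ≤ ∑ j, Psharp i0 j * mx := Finset.sum_le_sum (fun j _ =>
              mul_le_mul_of_nonneg_left (hup j) (hPnn i0 j))
          _ = mx := by rw [← Finset.sum_mul, hProw i0, one_mul]
      have hrec := hwrec i0
      calc mx = w i0 := hi0
        _ ≤ α * mx := by nlinarith [hvle i0, mul_le_mul_of_nonneg_left hP (le_of_lt hα0)]
    have hmx0 : mx ≤ 0 := by nlinarith
    exact fun i => le_trans (hup i) hmx0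
  calc μ ⬝ᵥ w = ∑ i, μ i * w i := rfl
    _ ≤ 0 := Finset.sum_nonpos (fun i _ => mul_nonpos_of_nonneg_of_nonpos (hμnn i) (hwle i))
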